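/- Let γ be real and (σ_N) a sequence of reals with σ_N > −1 and N·σ_N → γ as N → ∞. Let i_N be integers with 0 ≤ i_N ≤ N and i_N/N → x for some x ∈ [0,1]. Then lim_{N→∞} N² · Σ_{j=0}^{N} p_{N,σ_N}(i_N, j) · (j/N − i_N/N)² = 2·x·(1−x). If i_N = ⌊Nx⌋, the convergence is uniform in x for 0 ≤ x ≤ 1. -/

import Mathlib

open Filter

/-- The Moran transition function `p_{N,σ}` on `{0,1,…,N}` (zero off `{0,…,N}²` except as
specified): `p(0,0) = p(N,N) = 1`, boundary states are absorbing, and for `0 < i < N`: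
`p(i,i+1) = (1+σ)(i/N)(1−i/N)/(1+σ i/N)`, `p(i,i−1) = (i/N)(1−i/N)/(1+σ i/N)`,
`p(i,i) = 1 − p(i,i+1) − p(i,i−1)`. -/
noncomputable def moranP (N : ℕ) (σ : ℝ) (i j : ℕ) : ℝ :=
  if i = 0 ∨ i = N then (if j = i then 1 else 0)
  else if j = i + 1 then
    (1 + σ) * ((i : ℝ) / N) * (1 - (i : ℝ) / N) / (1 + σ * ((i : ℝ) / N))
  else if j + 1 = i then
    ((i : ℝ) / N) * (1 - (i : ℝ) / N) / (1 + σ * ((i : ℝ) / N))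
  else if j = i then
    1 - (1 + σ) * ((i : ℝ) / N) * (1 - (i : ℝ) / N) / (1 + σ * ((i : ℝ) / N))
      - ((i : ℝ) / N) * (1 - (i : ℝ) / N) / (1 + σ * ((i : ℝ) / N))
  else 0


lemma moran_sum_eq (N : ℕ) (σ : ℝ) (i : ℕ) (hi : i ≤ N) :
    (N : ℝ) ^ 2 * ∑ j ∈ Finset.range (N + 1),
        moranP N σ i j * ((j : ℝ) / N - (i : ℝ) / N) ^ 2
      = (2 + σ) * ((i : ℝ) / N) * (1 - (i : ℝ) / N) / (1 + σ * ((i : ℝ) / N)) := by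
  by_cases h : i = 0 ∨ i = N
  · have hs : ∑ j ∈ Finset.range (N + 1),
        moranP N σ i j * ((j : ℝ) / N - (i : ℝ) / N) ^ 2 = 0 := by
      apply Finset.sum_eq_zero
      intro j _
      rw [moranP, if_pos h]
      split_ifs with hj
      · subst hj; ring
      · ring
    rw [hs, mul_zero]
    rcases h with h | h
    · subst h; simp
    · rw [h]
      rcases Nat.eq_zero_or_pos N with hN | hN
      · subst hN; simp
      · have hN' : (N : ℝ) ≠ 0 := ne_of_gt (by exact_mod_cast hN)
        rw [div_self hN']
        simp
  · push_neg at h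
    obtain ⟨h0, hNe⟩ := h
    have hiN : i < N := lt_of_le_of_ne hi hNe
    have h1i : 1 ≤ i := Nat.one_le_iff_ne_zero.mpr h0
    have hNpos : 0 < N := lt_of_le_of_lt (Nat.zero_le i) hiN
    have hN : (N : ℝ) ≠ 0 := by positivity
    have hsub : ({i - 1, i + 1} : Finset ℕ) ⊆ Finset.range (N + 1) := by
      intro j hj
      simp only [Finset.mem_insert, Finset.mem_singleton] at hj
      rw [Finset.mem_range]; omega
    have hzero : ∀ j ∈ Finset.range (N + 1), j ∉ ({i - 1, i + 1} : Finset ℕ) →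
        moranP N σ i j * ((j : ℝ) / N - (i : ℝ) / N) ^ 2 = 0 := by
      intro j _ hjp
      simp only [Finset.mem_insert, Finset.mem_singleton, not_or] at hjp
      obtain ⟨hj1, hj2⟩ := hjp
      rw [moranP, if_neg (by push_neg; exact ⟨h0, hNe⟩)]
      split_ifs with h1 h2
      · exact absurd (show j = i - 1 by omega) hj1
      · subst h2; ring
      · ring
    have hm1 : moranP N σ i (i - 1)
        = ((i : ℝ) / N) * (1 - (i : ℝ) / N) / (1 + σ * ((i : ℝ) / N)) := by
      rw [moranP, if_neg (by push_neg; exact ⟨h0, hNe⟩), if_neg (by omega),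
        if_pos (by omega)]
    have hm2 : moranP N σ i (i + 1)
        = (1 + σ) * ((i : ℝ) / N) * (1 - (i : ℝ) / N) / (1 + σ * ((i : ℝ) / N)) := by
      rw [moranP, if_neg (by push_neg; exact ⟨h0, hNe⟩), if_pos rfl]
    have hc1 : ((i - 1 : ℕ) : ℝ) = (i : ℝ) - 1 := by
      push_cast [h1i]; ring
    have e1 : ((i - 1 : ℕ) : ℝ) / N - (i : ℝ) / N = -(1 / N) := by rw [hc1]; ring
    have e2 : ((i + 1 : ℕ) : ℝ) / N - (i : ℝ) / N = 1 / N := by push_cast; ring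
    rw [← Finset.sum_subset hsub hzero,
        Finset.sum_pair (by omega : i - 1 ≠ i + 1), hm1, hm2, e1, e2]
    set r := (i : ℝ) / N with hr
    have hone : (N : ℝ) ^ 2 * (1 / (N : ℝ)) ^ 2 = 1 := by field_simp
    calc (N : ℝ) ^ 2 * (r * (1 - r) / (1 + σ * r) * (-(1 / (N : ℝ))) ^ 2
            + (1 + σ) * r * (1 - r) / (1 + σ * r) * (1 / (N : ℝ)) ^ 2)
        = ((N : ℝ) ^ 2 * (1 / (N : ℝ)) ^ 2)
            * (r * (1 - r) / (1 + σ * r) + (1 + σ) * r * (1 - r) / (1 + σ * r)) := by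
          ring
      _ = r * (1 - r) / (1 + σ * r) + (1 + σ) * r * (1 - r) / (1 + σ * r) := by
          rw [hone, one_mul]
      _ = (r * (1 - r) + (1 + σ) * r * (1 - r)) / (1 + σ * r) := by rw [← add_div]
      _ = (2 + σ) * r * (1 - r) / (1 + σ * r) := by
          rw [show r * (1 - r) + (1 + σ) * r * (1 - r) = (2 + σ) * r * (1 - r) by ring]
set_option maxHeartbeats 800000 in
/-- the scaled one-step second moment of the Moran chain increment converges
to the Wright–Fisher infinitesimal variance `2 x (1−x)`, uniformly in `x` when
`i_N = ⌊Nx⌋`. -/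
theorem moran_variance_limit
    (γ : ℝ) (σ : ℕ → ℝ) (hσ : ∀ N, σ N > -1)
    (hσγ : Tendsto (fun N : ℕ => (N : ℝ) * σ N) atTop (nhds γ))
    (i : ℕ → ℕ) (hi : ∀ N, i N ≤ N)
    (x : ℝ) (hx : x ∈ Set.Icc (0 : ℝ) 1)
    (hix : Tendsto (fun N : ℕ => (i N : ℝ) / N) atTop (nhds x)) :
    Tendsto (fun N : ℕ => (N : ℝ) ^ 2 *
        ∑ j ∈ Finset.range (N + 1),
          moranP N (σ N) (i N) j * ((j : ℝ) / N - (i N : ℝ) / N) ^ 2)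
      atTop (nhds (2 * x * (1 - x)))
    ∧ TendstoUniformlyOn
        (fun (N : ℕ) (y : ℝ) => (N : ℝ) ^ 2 *
          ∑ j ∈ Finset.range (N + 1),
            moranP N (σ N) ⌊(N : ℝ) * y⌋₊ j *
              ((j : ℝ) / N - (⌊(N : ℝ) * y⌋₊ : ℝ) / N) ^ 2)
        (fun y => 2 * y * (1 - y)) atTop (Set.Icc 0 1) := by
  have hσ0 : Tendsto σ atTop (nhds 0) := by
    have h1 : Tendsto (fun N : ℕ => ((N : ℝ))⁻¹) atTop (nhds 0) :=
      tendsto_inv_atTop_nhds_zero_nat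
    have h2 := hσγ.mul h1
    rw [mul_zero] at h2
    refine h2.congr' ?_
    filter_upwards [eventually_ge_atTop 1] with N hN
    have hN0 : (N : ℝ) ≠ 0 := by
      have : (0 : ℝ) < N := by exact_mod_cast hN
      exact ne_of_gt this
    field_simp
  constructor
  · -- pointwise limit
    have hlim : Tendsto (fun N : ℕ =>
        (2 + σ N) * ((i N : ℝ) / N) * (1 - (i N : ℝ) / N)
          / (1 + σ N * ((i N : ℝ) / N)))
        atTop (nhds ((2 + 0) * x * (1 - x) / (1 + 0 * x))) := by
      exact Tendsto.div
        (((tendsto_const_nhds.add hσ0).mul hix).mul (tendsto_const_nhds.sub hix))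
        (tendsto_const_nhds.add (hσ0.mul hix)) (by norm_num)
    have he : (2 + 0) * x * (1 - x) / (1 + 0 * x) = 2 * x * (1 - x) := by norm_num
    rw [he] at hlim
    exact hlim.congr (fun N => (moran_sum_eq N (σ N) (i N) (hi N)).symm)
  · -- uniform limit
    rw [Metric.tendstoUniformlyOn_iff]
    intro ε hε
    have hσ0abs : Tendsto (fun N => |σ N|) atTop (nhds 0) := by
      simpa using hσ0.abs
    have hA : ∀ᶠ N in atTop, |σ N| < min (1/2) (ε/2) :=
      hσ0abs.eventually_lt_const (by positivity)
    have hB : ∀ᶠ N : ℕ in atTop, (4/ε : ℝ) < N :=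
      (tendsto_natCast_atTop_atTop (R := ℝ)).eventually_gt_atTop (4/ε)
    filter_upwards [hA, hB, eventually_ge_atTop 1] with N ha hb h1N
    intro y hy
    obtain ⟨hy0, hy1⟩ := hy
    have hNpos : (0 : ℝ) < N := by exact_mod_cast h1N
    have hNy0 : 0 ≤ (N : ℝ) * y := by positivity
    set iN := ⌊(N : ℝ) * y⌋₊ with hiNdef
    have hile : iN ≤ N := by
      have h1 : (N : ℝ) * y ≤ (N : ℝ) := by nlinarith
      calc iN ≤ ⌊(N : ℝ)⌋₊ := Nat.floor_le_floor h1
        _ = N := Nat.floor_natCast N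
    rw [Real.dist_eq, moran_sum_eq N (σ N) iN hile]
    set a := σ N with hadef
    set r := (iN : ℝ) / N with hrdef
    have hr0 : 0 ≤ r := by positivity
    have hr1 : r ≤ 1 := by
      rw [hrdef, div_le_one hNpos]
      exact_mod_cast hile
    have hNinv : (0 : ℝ) < 1 / N := by positivity
    have hfl : (iN : ℝ) ≤ N * y := Nat.floor_le hNy0
    have hfl2 : (N : ℝ) * y < iN + 1 := Nat.lt_floor_add_one _
    have hry : |r - y| ≤ 1 / N := by
      rw [abs_le]
      constructor
      · have h1 : y - 1 / N ≤ r := by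
          rw [hrdef, le_div_iff₀ hNpos]
          have : (1 / (N : ℝ)) * N = 1 := by field_simp
          nlinarith [hfl2]
        linarith
      · have h1 : r ≤ y := by
          rw [hrdef, div_le_iff₀ hNpos]
          linarith [hfl]
        linarith
    have haf : |a| < 1/2 := lt_of_lt_of_le ha (min_le_left _ _)
    have hae : |a| < ε/2 := lt_of_lt_of_le ha (min_le_right _ _)
    have har : |a * r| ≤ 1/2 := by
      rw [abs_mul, abs_of_nonneg hr0]
      calc |a| * r ≤ (1/2) * 1 :=
        mul_le_mul haf.le hr1 hr0 (by norm_num)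
        _ = 1/2 := by norm_num
    have hd2 : (1:ℝ)/2 ≤ 1 + a * r := by
      have := neg_abs_le (a * r)
      linarith
    have hd : (1:ℝ)/2 ≤ |1 + a * r| := hd2.trans (le_abs_self _)
    have hdne : (1 + a * r) ≠ 0 := by
      intro hc
      rw [hc] at hd2
      norm_num at hd2
    -- split the error
    have hsplit : 2 * y * (1 - y) - (2 + a) * r * (1 - r) / (1 + a * r)
        = (2 * y * (1 - y) - 2 * r * (1 - r))
          + (2 * r * (1 - r) - (2 + a) * r * (1 - r) / (1 + a * r)) := by ring
    have ht1 : |2 * y * (1 - y) - 2 * r * (1 - r)| ≤ 2 / N := by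
      have e : 2 * y * (1 - y) - 2 * r * (1 - r) = 2 * (y - r) * (1 - (y + r)) := by
        ring
      rw [e, abs_mul, abs_mul, abs_two]
      have h1 : |y - r| ≤ 1 / N := by rw [abs_sub_comm]; exact hry
      have h2 : |1 - (y + r)| ≤ 1 := by
        rw [abs_le]; constructor <;> linarith
      calc 2 * |y - r| * |1 - (y + r)| ≤ 2 * (1 / N) * 1 := by gcongr
        _ = 2 / N := by ring
    have ht2 : |2 * r * (1 - r) - (2 + a) * r * (1 - r) / (1 + a * r)| ≤ ε / 4 := by
      have e2 : 2 * r * (1 - r) - (2 + a) * r * (1 - r) / (1 + a * r)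
          = r * (1 - r) * (a * (2 * r - 1)) / (1 + a * r) := by
        rw [eq_div_iff hdne, sub_mul, div_mul_cancel₀ _ hdne]
        ring
      rw [e2, abs_div]
      have hnum : |r * (1 - r) * (a * (2 * r - 1))| ≤ ε / 8 := by
        rw [abs_mul]
        have hn1 : |r * (1 - r)| ≤ 1/4 := by
          rw [abs_of_nonneg (mul_nonneg hr0 (by linarith))]
          nlinarith [sq_nonneg (r - 1/2)]
        have hn2 : |a * (2 * r - 1)| ≤ ε / 2 := by
          rw [abs_mul]
          have h21 : |2 * r - 1| ≤ 1 := by rw [abs_le]; constructor <;> linarith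
          calc |a| * |2 * r - 1| ≤ (ε/2) * 1 :=
            mul_le_mul hae.le h21 (abs_nonneg _) (by positivity)
            _ = ε / 2 := by ring
        calc |r * (1 - r)| * |a * (2 * r - 1)| ≤ (1/4) * (ε/2) := by
              exact mul_le_mul hn1 hn2 (abs_nonneg _) (by norm_num)
          _ = ε / 8 := by ring
      calc |r * (1 - r) * (a * (2 * r - 1))| / |1 + a * r|
          ≤ (ε/8) / (1/2) := by
            apply div_le_div₀ (by positivity) hnum (by norm_num) hd
        _ = ε / 4 := by ring
    have hN4 : 2 / (N : ℝ) < ε / 2 := by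
      rw [div_lt_div_iff₀ hNpos (by norm_num : (0:ℝ) < 2)]
      have h4 : 4 < (N : ℝ) * ε := by
        rw [← div_lt_iff₀ hε]
        linarith [hb]
      linarith [h4, mul_comm (N : ℝ) ε]
    calc |2 * y * (1 - y) - (2 + a) * r * (1 - r) / (1 + a * r)|
        ≤ |2 * y * (1 - y) - 2 * r * (1 - r)|
          + |2 * r * (1 - r) - (2 + a) * r * (1 - r) / (1 + a * r)| := by
          rw [hsplit]; exact abs_add_le _ _
      _ ≤ 2 / N + ε / 4 := add_le_add ht1 ht2
      _ < ε := by linarith
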